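/- Let α, β be positive odd integers, ω ∈ ℤ, η ≥ 0 an integer, and let D̃ = {(0,0)ᵗ, (α,0)ᵗ, (ω, 2^η β)ᵗ, (−α−ω, −2^η β)ᵗ} ⊂ ℤ². Let A = 2^{η+1}αβ·I ∈ M₂(ℤ). For any choice of ℓ₀ ∈ T_{η,0}, ℓ₁ ∈ T_{η,1}, ℓ₂ ∈ T_{η,2}, ℓ₃ ∈ T_{η,3}, set C = {2^{η+1}αβ·ℓ₀, 2^{η+1}αβ·ℓ₁, 2^{η+1}αβ·ℓ₂, 2^{η+1}αβ·ℓ₃} ⊂ ℤ². Then (δ_{A⁻¹D̃}, C) is a spectral pair, i.e. {e^{2πi⟨c,x⟩} : c ∈ C} is an orthonormal basis of L²(δ_{A⁻¹D̃}). -/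

import Mathlib

open MeasureTheory Matrix Complex
open scoped ENNReal

noncomputable section

/-- The exponential function `x ↦ e^{2πi⟨l,x⟩}` on `Fin n → ℝ`. -/
def expChar {n : ℕ} (l x : Fin n → ℝ) : ℂ :=
  Complex.exp (2 * Real.pi * Complex.I * Complex.ofReal (∑ i, l i * x i))

/-- `Λ` is an orthogonal set of `μ`: the exponentials `e^{2πi⟨λ,·⟩}`, `λ ∈ Λ`,
form an orthonormal family in `L²(μ)`. -/
def IsOrthogonalSet {n : ℕ} (μ : Measure (Fin n → ℝ)) (Λ : Set (Fin n → ℝ)) : Prop :=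
  ∃ b : Λ → Lp ℂ 2 μ,
    (∀ l : Λ, (b l : (Fin n → ℝ) → ℂ) =ᵐ[μ] expChar (l : Fin n → ℝ)) ∧
    Orthonormal ℂ b

/-- `Λ` is a spectrum of `μ`: the exponentials `e^{2πi⟨λ,·⟩}`, `λ ∈ Λ`,
form an orthonormal basis (orthonormal and total) of `L²(μ)`. -/
def IsSpectrum {n : ℕ} (μ : Measure (Fin n → ℝ)) (Λ : Set (Fin n → ℝ)) : Prop :=
  ∃ b : Λ → Lp ℂ 2 μ,
    (∀ l : Λ, (b l : (Fin n → ℝ) → ℂ) =ᵐ[μ] expChar (l : Fin n → ℝ)) ∧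
    Orthonormal ℂ b ∧
    (Submodule.span ℂ (Set.range b)).topologicalClosure = ⊤

/-- `μ` is a spectral measure : some countable `Λ` is a spectrum of `μ`. -/
def IsSpectralMeasure {n : ℕ} (μ : Measure (Fin n → ℝ)) : Prop :=
  ∃ Λ : Set (Fin n → ℝ), Λ.Countable ∧ IsSpectrum μ Λ

/-- A real matrix is expansive if all of its (complex) eigenvalues have modulus `> 1`. -/
def Expansive {n : ℕ} (M : Matrix (Fin n) (Fin n) ℝ) : Prop :=
  ∀ z : ℂ, (M.map (Complex.ofReal)).charpoly.IsRoot z → 1 < ‖z‖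

/-- `μ` is the self-affine measure associated with `(M, D)`: a compactly supported
Borel probability measure satisfying `μ = (1/#D) ∑_{d ∈ D} μ ∘ φ_d⁻¹`,
where `φ_d x = M⁻¹(x + d)`. -/
def IsSelfAffineMeasure {n : ℕ} (M : Matrix (Fin n) (Fin n) ℝ) (D : Finset (Fin n → ℝ))
    (μ : Measure (Fin n → ℝ)) : Prop :=
  IsProbabilityMeasure μ ∧
  (∃ K : Set (Fin n → ℝ), IsCompact K ∧ μ Kᶜ = 0) ∧
  μ = (D.card : ℝ≥0∞)⁻¹ • ∑ d ∈ D, μ.map (fun x => M⁻¹.mulVec (x + d))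

/-- Coordinatewise cast of an integer vector to a real vector. -/
def intCast {n : ℕ} (v : Fin n → ℤ) : Fin n → ℝ := fun i => (v i : ℝ)

/-- The matrix `H = N^{-1/2} (e^{2πi⟨M⁻¹d, s⟩})_{d ∈ D, s ∈ S}`. -/
def hadamardH {n : ℕ} (M : Matrix (Fin n) (Fin n) ℤ) (D S : Finset (Fin n → ℤ)) :
    Matrix D S ℂ := fun d s =>
  (Real.sqrt (D.card) : ℂ)⁻¹ *
    Complex.exp (2 * Real.pi * Complex.I *
      Complex.ofReal (∑ i, ((M.map (Int.cast : ℤ → ℝ))⁻¹.mulVec (intCast d.1)) i * ((s.1 i : ℝ))))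

/-- `(M, D, S)` is a Hadamard triple: `#D = #S` and
`H = N^{-1/2}(e^{2πi⟨M⁻¹d,s⟩})` is unitary. -/
def IsHadamardTriple {n : ℕ} (M : Matrix (Fin n) (Fin n) ℤ) (D S : Finset (Fin n → ℤ)) :
    Prop :=
  D.card = S.card ∧ (hadamardH M D S)ᴴ * hadamardH M D S = 1

/-- `(M, D)` is admissible: there is `S ⊂ ℤⁿ` such that `(M, D, S)` is a Hadamard triple. -/
def IsAdmissible {n : ℕ} (M : Matrix (Fin n) (Fin n) ℤ) (D : Finset (Fin n → ℤ)) : Prop :=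
  ∃ S : Finset (Fin n → ℤ), IsHadamardTriple M D S

/-- The mask polynomial `m_D(x) = (1/#D) ∑_{d∈D} e^{2πi⟨d,x⟩}` of a finite set `D`. -/
def maskPoly {n : ℕ} (D : Finset (Fin n → ℝ)) (x : Fin n → ℝ) : ℂ :=
  (D.card : ℂ)⁻¹ * ∑ d ∈ D, Complex.exp (2 * Real.pi * Complex.I * Complex.ofReal (∑ i, d i * x i))

/-- The Fourier transform `μ̂(ξ) = ∫ e^{2πi⟨x,ξ⟩} dμ(x)`. -/
def fourierMeasure {n : ℕ} (μ : Measure (Fin n → ℝ)) (ξ : Fin n → ℝ) : ℂ :=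
  ∫ x, expChar ξ x ∂μ

/-- The sets `T_{η,0}, T_{η,1}, T_{η,2}, T_{η,3}` associated with positive odd
integers `α, β`, `ω ∈ ℤ` and `η ≥ 0`:
`T_{η,i} = {(2^η(2k+δᵢ)β, (2k'+εᵢ)α − (2k+δᵢ)ω)ᵗ/(2^{η+1}αβ) : 0 ≤ k < α, 0 ≤ k' < 2^η β}`
where `δᵢ = i % 2` and `εᵢ = i / 2`. -/
def Tset (α β ω : ℤ) (η : ℕ) (i : Fin 4) : Set (Fin 2 → ℝ) :=
  { v | ∃ k k' : ℤ, 0 ≤ k ∧ k < α ∧ 0 ≤ k' ∧ k' < 2 ^ η * β ∧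
      v = ((2 : ℝ) ^ (η + 1) * (α : ℝ) * (β : ℝ))⁻¹ •
        intCast ![2 ^ η * (2 * k + ((i.val % 2 : ℕ) : ℤ)) * β,
          (2 * k' + ((i.val / 2 : ℕ) : ℤ)) * α - (2 * k + ((i.val % 2 : ℕ) : ℤ)) * ω] }
namespace UMSP

lemma continuous_expChar {n : ℕ} (l : Fin n → ℝ) : Continuous (expChar l) := by
  unfold expChar; fun_prop

lemma norm_expChar {n : ℕ} (l x : Fin n → ℝ) : ‖expChar l x‖ = 1 := by
  unfold expChar
  rw [show (2 * (Real.pi:ℂ) * Complex.I * ((∑ i, l i * x i : ℝ) : ℂ))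
      = (((2 * Real.pi * (∑ i, l i * x i) : ℝ)) : ℂ) * Complex.I by push_cast; ring]
  rw [Complex.norm_exp_ofReal_mul_I]

lemma exp_half (m : ℤ) :
    Complex.exp (2 * (Real.pi:ℂ) * Complex.I * (((m : ℝ)/2 : ℝ) : ℂ)) = (-1:ℂ) ^ m := by
  rw [show (2 * (Real.pi:ℂ) * Complex.I * (((m : ℝ)/2 : ℝ) : ℂ))
      = (m:ℂ) * ((Real.pi:ℂ) * Complex.I) by push_cast; ring,
    Complex.exp_int_mul, Complex.exp_pi_mul_I]

lemma zpow_parity (k d : ℤ) : (-1:ℂ) ^ (2*k+d) = (-1:ℂ) ^ d := by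
  rw [zpow_add₀ (by norm_num : (-1:ℂ) ≠ 0), _root_.zpow_mul]
  norm_num

lemma value_core (N : ℝ) (hN : N ≠ 0) (c d : Fin 2 → ℤ) (q r : ℤ)
    (h : ((c 0 : ℝ) * d 0 + c 1 * d 1) = ((2*q+r : ℤ) : ℝ)/2 * N) :
    expChar (intCast c) (N⁻¹ • intCast d) = (-1:ℂ) ^ r := by
  unfold expChar intCast
  have hs : (∑ i : Fin 2, (c i : ℝ) * ((N⁻¹ • fun t : Fin 2 => ((d t : ℝ))) i))
      = ((2*q+r : ℤ) : ℝ)/2 := by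
    simp only [Fin.sum_univ_two, Pi.smul_apply, smul_eq_mul]
    have : (c 0 : ℝ) * (N⁻¹ * d 0) + (c 1 : ℝ) * (N⁻¹ * d 1)
        = N⁻¹ * ((c 0 : ℝ) * d 0 + (c 1 : ℝ) * d 1) := by ring
    rw [this, h]
    field_simp
  rw [hs, exp_half, zpow_parity]

end UMSP

open UMSP

set_option maxHeartbeats 2000000 in
theorem uniform_measure_spectral_pair
    (α β ω : ℤ) (hα : Odd α) (hβ : Odd β) (hαpos : 0 < α) (hβpos : 0 < β) (η : ℕ)
    (Dt : Finset (Fin 2 → ℤ))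
    (hDt : Dt = {![0, 0], ![α, 0], ![ω, 2 ^ η * β], ![-α - ω, -(2 ^ η * β)]})
    (l : Fin 4 → (Fin 2 → ℝ)) (hl : ∀ i, l i ∈ Tset α β ω η i) :
    IsSpectrum
      ((Dt.card : ℝ≥0∞)⁻¹ • ∑ d ∈ Dt,
        Measure.dirac (((2 : ℝ) ^ (η + 1) * (α : ℝ) * (β : ℝ))⁻¹ • intCast d))
      (Set.range fun i => ((2 : ℝ) ^ (η + 1) * (α : ℝ) * (β : ℝ)) • l i) := by
  classical
  have hNpos : (0:ℝ) < (2 : ℝ) ^ (η + 1) * (α : ℝ) * (β : ℝ) := by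
    have ha : (0:ℝ) < (α:ℝ) := by exact_mod_cast hαpos
    have hb : (0:ℝ) < (β:ℝ) := by exact_mod_cast hβpos
    positivity
  set N : ℝ := (2 : ℝ) ^ (η + 1) * (α : ℝ) * (β : ℝ) with hNdef
  have hN : N ≠ 0 := ne_of_gt hNpos
  -- integer points and real points
  set dv : Fin 4 → (Fin 2 → ℤ) :=
    ![![0, 0], ![α, 0], ![ω, 2 ^ η * β], ![-α - ω, -(2 ^ η * β)]] with hdv
  set pt : Fin 4 → (Fin 2 → ℝ) := fun j => N⁻¹ • intCast (dv j) with hpt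
  have hPpos : (0:ℤ) < 2 ^ η * β := by positivity
  -- pairwise distinctness of the four integer vectors
  have hne01 : ![(0:ℤ), 0] ≠ ![α, 0] := fun h => by
    have := congrFun h 0; simp at this; omega
  have hne02 : ![(0:ℤ), 0] ≠ ![ω, 2 ^ η * β] := fun h => by
    have := congrFun h 1; simp at this; omega
  have hne03 : ![(0:ℤ), 0] ≠ ![-α - ω, -(2 ^ η * β)] := fun h => by
    have := congrFun h 1; simp at this; omega
  have hne12 : ![(α:ℤ), 0] ≠ ![ω, 2 ^ η * β] := fun h => by
    have := congrFun h 1; simp at this; omega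
  have hne13 : ![(α:ℤ), 0] ≠ ![-α - ω, -(2 ^ η * β)] := fun h => by
    have := congrFun h 1; simp at this; omega
  have hne23 : ![ω, 2 ^ η * β] ≠ ![-α - ω, -(2 ^ η * β)] := fun h => by
    have := congrFun h 1; simp at this; omega
  have hcard : Dt.card = 4 := by
    rw [hDt]
    rw [Finset.card_insert_of_notMem (by simp [hne01, hne02, hne03]),
      Finset.card_insert_of_notMem (by simp [hne12, hne13]),
      Finset.card_insert_of_notMem (by simp [hne23]),
      Finset.card_singleton]
  set μ₀ : Measure (Fin 2 → ℝ) :=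
    (Dt.card : ℝ≥0∞)⁻¹ • ∑ d ∈ Dt, Measure.dirac (N⁻¹ • intCast d) with hμ₀
  have hμ : μ₀ = (4 : ℝ≥0∞)⁻¹ •
      (Measure.dirac (pt 0) + Measure.dirac (pt 1) + Measure.dirac (pt 2)
        + Measure.dirac (pt 3)) := by
    rw [hμ₀, hcard, hDt]
    rw [Finset.sum_insert (by simp [hne01, hne02, hne03]),
      Finset.sum_insert (by simp [hne12, hne13]),
      Finset.sum_insert (by simp [hne23]),
      Finset.sum_singleton]
    rw [show ((4:ℕ):ℝ≥0∞)⁻¹ = (4:ℝ≥0∞)⁻¹ by norm_num]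
    congr 1
    · have e0 : pt 0 = N⁻¹ • intCast ![0, 0] := by simp [hpt, hdv]
      have e1 : pt 1 = N⁻¹ • intCast ![α, 0] := by simp [hpt, hdv]
      have e2 : pt 2 = N⁻¹ • intCast ![ω, 2 ^ η * β] := by simp [hpt, hdv]
      have e3 : pt 3 = N⁻¹ • intCast ![-α - ω, -(2 ^ η * β)] := by simp [hpt, hdv]
      rw [e0, e1, e2, e3]
      abel
  -- the Hadamard sign matrix
  set S : Fin 4 → Fin 4 → ℂ :=
    fun i j => !![(1:ℂ), 1, 1, 1; 1, -1, 1, -1; 1, 1, -1, -1; 1, -1, -1, 1] i j with hS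
  -- values of the exponentials at the four atoms
  have hval : ∀ i j : Fin 4, expChar (N • l i) (pt j) = S i j := by
    intro i j
    obtain ⟨k, k', -, -, -, -, hli⟩ := hl i
    rw [← hNdef] at hli
    have hc : N • l i = intCast ![2 ^ η * (2 * k + ((i.val % 2 : ℕ) : ℤ)) * β,
        (2 * k' + ((i.val / 2 : ℕ) : ℤ)) * α - (2 * k + ((i.val % 2 : ℕ) : ℤ)) * ω] := by
      rw [hli, smul_smul, mul_inv_cancel₀ hN, one_smul]
    rw [hc]
    simp only [hpt]
    fin_cases i <;> fin_cases j
    · exact (value_core N hN _ _ 0 0 (by simp [hdv, hNdef]; try push_cast; try ring)).trans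
        (by norm_num [hS])
    · exact (value_core N hN _ _ k 0 (by simp [hdv, hNdef]; try push_cast; try ring)).trans
        (by norm_num [hS])
    · exact (value_core N hN _ _ k' 0 (by simp [hdv, hNdef]; try push_cast; try ring)).trans
        (by norm_num [hS])
    · exact (value_core N hN _ _ (-k-k') 0 (by simp [hdv, hNdef]; try push_cast; try ring)).trans
        (by norm_num [hS])
    · exact (value_core N hN _ _ 0 0 (by simp [hdv, hNdef]; try push_cast; try ring)).trans
        (by norm_num [hS])
    · exact (value_core N hN _ _ k 1 (by simp [hdv, hNdef]; try push_cast; try ring)).trans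
        (by norm_num [hS])
    · exact (value_core N hN _ _ k' 0 (by simp [hdv, hNdef]; try push_cast; try ring)).trans
        (by norm_num [hS])
    · exact (value_core N hN _ _ (-k-k'-1) 1 (by simp [hdv, hNdef]; try push_cast; try ring)).trans
        (by norm_num [hS])
    · exact (value_core N hN _ _ 0 0 (by simp [hdv, hNdef]; try push_cast; try ring)).trans
        (by norm_num [hS])
    · exact (value_core N hN _ _ k 0 (by simp [hdv, hNdef]; try push_cast; try ring)).trans
        (by norm_num [hS])
    · exact (value_core N hN _ _ k' 1 (by simp [hdv, hNdef]; try push_cast; try ring)).trans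
        (by norm_num [hS])
    · exact (value_core N hN _ _ (-k-k'-1) 1 (by simp [hdv, hNdef]; try push_cast; try ring)).trans
        (by norm_num [hS])
    · exact (value_core N hN _ _ 0 0 (by simp [hdv, hNdef]; try push_cast; try ring)).trans
        (by norm_num [hS])
    · exact (value_core N hN _ _ k 1 (by simp [hdv, hNdef]; try push_cast; try ring)).trans
        (by norm_num [hS])
    · exact (value_core N hN _ _ k' 1 (by simp [hdv, hNdef]; try push_cast; try ring)).trans
        (by norm_num [hS])
    · exact (value_core N hN _ _ (-k-k'-1) 0 (by simp [hdv, hNdef]; try push_cast; try ring)).trans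
        (by norm_num [hS])
  -- μ₀ is a finite measure
  haveI hfin : IsFiniteMeasure μ₀ := by
    constructor
    rw [hμ]
    rw [Measure.smul_apply, Measure.add_apply, Measure.add_apply, Measure.add_apply]
    simp [Measure.dirac_apply_of_mem (Set.mem_univ _)]
    rw [show ((1:ℝ≥0∞) + 1 + 1 + 1) = 4 by norm_num]
    exact ENNReal.mul_lt_top (by norm_num) (by norm_num)
  -- integration against μ₀
  have hInt : ∀ f : (Fin 2 → ℝ) → ℂ, Continuous f → (∀ x, ‖f x‖ ≤ 1) →
      ∫ x, f x ∂μ₀ = (4:ℝ)⁻¹ • (f (pt 0) + f (pt 1) + f (pt 2) + f (pt 3)) := by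
    intro f hf hbd
    have hi : ∀ x : Fin 2 → ℝ, Integrable f (Measure.dirac x) := fun x =>
      memLp_one_iff_integrable.mp
        (MemLp.of_bound hf.aestronglyMeasurable 1 (Filter.Eventually.of_forall hbd))
    have h01 : Integrable f (Measure.dirac (pt 0) + Measure.dirac (pt 1)) :=
      (hi _).add_measure (hi _)
    have h012 : Integrable f (Measure.dirac (pt 0) + Measure.dirac (pt 1)
        + Measure.dirac (pt 2)) := h01.add_measure (hi _)
    rw [hμ, integral_smul_measure, integral_add_measure h012 (hi _),
      integral_add_measure h01 (hi _), integral_add_measure (hi _) (hi _),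
      integral_dirac, integral_dirac, integral_dirac, integral_dirac]
    norm_num
  -- membership in L²
  have hmem : ∀ i : Fin 4, MemLp (expChar (N • l i)) 2 μ₀ := fun i =>
    MemLp.of_bound (continuous_expChar _).aestronglyMeasurable 1
      (Filter.Eventually.of_forall fun x => le_of_eq (norm_expChar _ _))
  set Λ : Set (Fin 2 → ℝ) := Set.range fun i => N • l i with hΛ
  have idx : ∀ lam : Λ, ∃ i : Fin 4, N • l i = lam.1 := fun lam => Set.mem_range.mp lam.2
  set ix : Λ → Fin 4 := fun lam => (idx lam).choose with hix
  have hidx : ∀ lam : Λ, N • l (ix lam) = lam.1 := fun lam => (idx lam).choose_spec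
  set bb : Λ → Lp ℂ 2 μ₀ := fun lam => ((hmem (ix lam)).toLp _) with hbb
  have hbae : ∀ lam : Λ, ⇑(bb lam) =ᵐ[μ₀] expChar lam.1 := by
    intro lam
    filter_upwards [MemLp.coeFn_toLp (hmem (ix lam))] with x hx
    simp only [hbb] at hx ⊢
    rw [hx, hidx lam]
  -- inner products
  have hcont : ∀ i i' : Fin 4, Continuous fun x =>
      (starRingEnd ℂ) (expChar (N • l i) x) * expChar (N • l i') x :=
    fun i i' => ((Complex.continuous_conj).comp (continuous_expChar _)).mul
      (continuous_expChar _)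
  have hbd1 : ∀ (i i' : Fin 4) (x : Fin 2 → ℝ),
      ‖(starRingEnd ℂ) (expChar (N • l i) x) * expChar (N • l i') x‖ ≤ 1 := by
    intro i i' x
    rw [norm_mul, RCLike.norm_conj, norm_expChar, norm_expChar, mul_one]
  have hinner : ∀ x y : Λ, (inner ℂ (bb x) (bb y) : ℂ) =
      (4:ℝ)⁻¹ • ((starRingEnd ℂ) (S (ix x) 0) * S (ix y) 0
        + (starRingEnd ℂ) (S (ix x) 1) * S (ix y) 1
        + (starRingEnd ℂ) (S (ix x) 2) * S (ix y) 2
        + (starRingEnd ℂ) (S (ix x) 3) * S (ix y) 3) := by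
    intro x y
    rw [hbb]
    rw [MeasureTheory.L2.inner_def]
    rw [integral_congr_ae (g := fun t =>
      (starRingEnd ℂ) (expChar (N • l (ix x)) t) * expChar (N • l (ix y)) t)
      (by filter_upwards [MemLp.coeFn_toLp (hmem (ix x)), MemLp.coeFn_toLp (hmem (ix y))]
            with t h1 h2
          rw [RCLike.inner_apply, h1, h2, mul_comm])]
    rw [hInt _ (hcont _ _) (hbd1 _ _)]
    simp only [hval]
  refine ⟨bb, hbae, ?_, ?_⟩
  · -- orthonormality
    rw [orthonormal_iff_ite]
    intro x y
    rw [hinner x y]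
    by_cases hxy : x = y
    · subst hxy
      rw [if_pos rfl]
      have key : ∀ i : Fin 4, (starRingEnd ℂ) (S i 0) * S i 0
          + (starRingEnd ℂ) (S i 1) * S i 1 + (starRingEnd ℂ) (S i 2) * S i 2
          + (starRingEnd ℂ) (S i 3) * S i 3 = 4 := by
        intro i; fin_cases i <;> norm_num [hS, Matrix.cons_val_two, Matrix.cons_val_three]
      rw [key]
      rw [Complex.real_smul]
      norm_num
    · rw [if_neg hxy]
      have hne : ix x ≠ ix y := fun h => hxy (Subtype.ext (by rw [← hidx x, ← hidx y, h]))
      have key : ∀ i i' : Fin 4, i ≠ i' → (starRingEnd ℂ) (S i 0) * S i' 0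
          + (starRingEnd ℂ) (S i 1) * S i' 1 + (starRingEnd ℂ) (S i 2) * S i' 2
          + (starRingEnd ℂ) (S i 3) * S i' 3 = 0 := by
        intro i i' h
        fin_cases i <;> fin_cases i' <;> first
          | exact absurd rfl h
          | norm_num [hS, Matrix.cons_val_two, Matrix.cons_val_three]
      rw [key _ _ hne]
      simp
  · -- totality
    have hae4 : ∀ᵐ x ∂μ₀, x = pt 0 ∨ x = pt 1 ∨ x = pt 2 ∨ x = pt 3 := by
      rw [hμ]
      refine Measure.ae_smul_measure ?_ _
      rw [ae_add_measure_iff, ae_add_measure_iff, ae_add_measure_iff]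
      simp only [ae_dirac_eq, Filter.eventually_pure]
      tauto
    set e : Fin 4 → Λ := fun i => ⟨N • l i, ⟨i, rfl⟩⟩ with he
    have hbe : ∀ i : Fin 4, ⇑(bb (e i)) =ᵐ[μ₀] expChar (N • l i) := fun i => hbae (e i)
    have hsp : Submodule.span ℂ (Set.range bb) = ⊤ := by
      rw [Submodule.eq_top_iff']
      intro f
      have hfe : f =
          ((4:ℂ)⁻¹ * (f (pt 0) + f (pt 1) + f (pt 2) + f (pt 3))) • bb (e 0)
          + ((4:ℂ)⁻¹ * (f (pt 0) - f (pt 1) + f (pt 2) - f (pt 3))) • bb (e 1)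
          + ((4:ℂ)⁻¹ * (f (pt 0) + f (pt 1) - f (pt 2) - f (pt 3))) • bb (e 2)
          + ((4:ℂ)⁻¹ * (f (pt 0) - f (pt 1) - f (pt 2) + f (pt 3))) • bb (e 3) := by
        refine (MeasureTheory.Lp.ext (μ := μ₀) ?_).symm
        set c0 : ℂ := (4:ℂ)⁻¹ * (f (pt 0) + f (pt 1) + f (pt 2) + f (pt 3)) with hc0
        set c1 : ℂ := (4:ℂ)⁻¹ * (f (pt 0) - f (pt 1) + f (pt 2) - f (pt 3)) with hc1
        set c2 : ℂ := (4:ℂ)⁻¹ * (f (pt 0) + f (pt 1) - f (pt 2) - f (pt 3)) with hc2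
        set c3 : ℂ := (4:ℂ)⁻¹ * (f (pt 0) - f (pt 1) - f (pt 2) + f (pt 3)) with hc3
        filter_upwards [hae4,
          Lp.coeFn_add (c0 • bb (e 0) + c1 • bb (e 1) + c2 • bb (e 2)) (c3 • bb (e 3)),
          Lp.coeFn_add (c0 • bb (e 0) + c1 • bb (e 1)) (c2 • bb (e 2)),
          Lp.coeFn_add (c0 • bb (e 0)) (c1 • bb (e 1)),
          Lp.coeFn_smul c0 (bb (e 0)), Lp.coeFn_smul c1 (bb (e 1)),
          Lp.coeFn_smul c2 (bb (e 2)), Lp.coeFn_smul c3 (bb (e 3)),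
          hbe 0, hbe 1, hbe 2, hbe 3] with x hx h1 h2 h3 g0 g1 g2 g3 e0 e1 e2 e3
        rw [h1, Pi.add_apply, h2, Pi.add_apply, h3, Pi.add_apply,
          g0, g1, g2, g3, Pi.smul_apply, Pi.smul_apply, Pi.smul_apply, Pi.smul_apply,
          e0, e1, e2, e3, smul_eq_mul, smul_eq_mul, smul_eq_mul, smul_eq_mul]
        rcases hx with h | h | h | h <;> subst h <;>
          rw [hval 0, hval 1, hval 2, hval 3, hc0, hc1, hc2, hc3] <;>
          norm_num [hS, Matrix.vecHead, Matrix.vecTail, Matrix.cons_val_two, Matrix.cons_val_three] <;> ring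
      rw [hfe]
      refine Submodule.add_mem _ (Submodule.add_mem _ (Submodule.add_mem _ ?_ ?_) ?_) ?_ <;>
        exact Submodule.smul_mem _ _ (Submodule.subset_span (Set.mem_range_self _))
    rw [hsp]
    exact le_antisymm le_top (Submodule.le_topologicalClosure ⊤)

end
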